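/- Define h : ℝ^n → ℝ by h(x) = ‖x‖₁/‖x‖₂ for x ≠ 0 and h(0) = 1. Let x₀ ∈ ℝ^n with x₀ ≠ 0 and let w ∈ ℝ^n satisfy wᵢ = 0 for every i with (x₀)ᵢ ≠ 0. Then lim_{τ→0⁺} (h(x₀ + τw) − h(x₀))/τ = ‖w‖₁/‖x₀‖₂ and lim_{τ→0⁺} (h(x₀ − τw) − h(x₀))/τ = ‖w‖₁/‖x₀‖₂. In particular, if w ≠ 0, the one-sided directional derivatives of h at x₀ in directions w and −w are both equal to the strictly positive number ‖w‖₁/‖x₀‖₂. -/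

import Mathlib

noncomputable section
open Classical

/-- The ℓ¹ norm on ℝ^n. -/
def l1 {n : ℕ} (x : EuclideanSpace ℝ (Fin n)) : ℝ := ∑ i, |x i|

/-- The ratio ‖x‖₁/‖x‖₂ with the convention that it equals 1 at the origin. -/
def ratio {n : ℕ} (x : EuclideanSpace ℝ (Fin n)) : ℝ :=
  if x = 0 then 1 else l1 x / ‖x‖

theorem stmt6 {n : ℕ} (x₀ w : EuclideanSpace ℝ (Fin n)) (hx₀ : x₀ ≠ 0)
    (hw : ∀ i, x₀ i ≠ 0 → w i = 0) :
    Filter.Tendsto (fun τ : ℝ => (ratio (x₀ + τ • w) - ratio x₀) / τ)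
      (nhdsWithin 0 (Set.Ioi 0)) (nhds (l1 w / ‖x₀‖)) ∧
    Filter.Tendsto (fun τ : ℝ => (ratio (x₀ - τ • w) - ratio x₀) / τ)
      (nhdsWithin 0 (Set.Ioi 0)) (nhds (l1 w / ‖x₀‖)) ∧
    (w ≠ 0 → 0 < l1 w / ‖x₀‖) := by
  have hx₀norm : (0:ℝ) < ‖x₀‖ := norm_pos_iff.mpr hx₀
  set F : ℝ → ℝ := fun τ => (l1 x₀ + τ * l1 w) / Real.sqrt (‖x₀‖^2 + τ^2 * ‖w‖^2) with hF
  have hsqrt0 : Real.sqrt (‖x₀‖^2 + (0:ℝ)^2 * ‖w‖^2) = ‖x₀‖ := by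
    simp [Real.sqrt_sq (le_of_lt hx₀norm)]
  have hF0 : F 0 = l1 x₀ / ‖x₀‖ := by simp [hF, hsqrt0]
  have hratio0 : ratio x₀ = l1 x₀ / ‖x₀‖ := by simp [ratio, hx₀]
  -- derivative of F at 0
  have hnum : HasDerivAt (fun τ : ℝ => l1 x₀ + τ * l1 w) (l1 w) 0 := by
    exact ((hasDerivAt_const (0:ℝ) (l1 x₀)).add (hasDerivAt_mul_const (l1 w))).congr_deriv (by simp)
  have hin : HasDerivAt (fun τ : ℝ => ‖x₀‖^2 + τ^2 * ‖w‖^2) 0 0 := by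
    have := (hasDerivAt_const (0:ℝ) (‖x₀‖^2)).add ((hasDerivAt_pow 2 (0:ℝ)).mul_const (‖w‖^2))
    exact this.congr_deriv (by simp)
  have hinne : ‖x₀‖^2 + (0:ℝ)^2 * ‖w‖^2 ≠ 0 := by positivity
  have hden : HasDerivAt (fun τ : ℝ => Real.sqrt (‖x₀‖^2 + τ^2 * ‖w‖^2))
      (0 / (2 * Real.sqrt (‖x₀‖^2 + (0:ℝ)^2 * ‖w‖^2))) 0 := hin.sqrt hinne
  have hdenne : Real.sqrt (‖x₀‖^2 + (0:ℝ)^2 * ‖w‖^2) ≠ 0 := by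
    rw [hsqrt0]; exact ne_of_gt hx₀norm
  have hFderiv : HasDerivAt F (l1 w / ‖x₀‖) 0 := by
    have h := hnum.div hden hdenne
    rw [hsqrt0] at h
    refine h.congr_deriv ?_
    simp only [zero_div, mul_zero, sub_zero]
    rw [div_eq_div_iff (by positivity) (ne_of_gt hx₀norm)]
    ring
  -- the key pointwise identities for τ > 0
  have key : ∀ τ : ℝ, 0 < τ → ∀ s : ℝ, s = 1 ∨ s = -1 →
      ratio (x₀ + (s * τ) • w) = F τ := by
    intro τ hτ s hs
    have habs : ∀ i, |x₀ i + (s * τ) * w i| = |x₀ i| + τ * |w i| := by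
      intro i
      by_cases hi : x₀ i = 0
      · rw [hi, zero_add, abs_zero, zero_add, abs_mul, abs_mul]
        rcases hs with h | h <;> simp [h, abs_of_pos hτ]
      · rw [hw i hi, mul_zero, add_zero, abs_zero, mul_zero, add_zero]
    have hl1 : l1 (x₀ + (s * τ) • w) = l1 x₀ + τ * l1 w := by
      simp only [l1, PiLp.add_apply, PiLp.smul_apply, smul_eq_mul]
      rw [Finset.mul_sum, ← Finset.sum_add_distrib]
      exact Finset.sum_congr rfl fun i _ => habs i
    have hne : x₀ + (s * τ) • w ≠ 0 := by
      obtain ⟨i, hi⟩ : ∃ i, x₀ i ≠ 0 := by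
        by_contra h; push_neg at h; exact hx₀ (by ext j; exact h j)
      intro h
      apply hi
      have := congrFun (congrArg (fun v : EuclideanSpace ℝ (Fin n) => (v : Fin n → ℝ)) h) i
      simp only [PiLp.add_apply, PiLp.smul_apply, smul_eq_mul, hw i hi, mul_zero, add_zero] at this
      exact this
    have hnorm : ‖x₀ + (s * τ) • w‖ = Real.sqrt (‖x₀‖^2 + τ^2 * ‖w‖^2) := by
      rw [EuclideanSpace.norm_eq]
      congr 1
      have hx : ‖x₀‖^2 = ∑ i, (x₀ i)^2 := by
        rw [EuclideanSpace.norm_eq, Real.sq_sqrt (by positivity)]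
        simp [sq_abs]
      have hwn : ‖w‖^2 = ∑ i, (w i)^2 := by
        rw [EuclideanSpace.norm_eq, Real.sq_sqrt (by positivity)]
        simp [sq_abs]
      rw [hx, hwn, Finset.mul_sum, ← Finset.sum_add_distrib]
      refine Finset.sum_congr rfl fun i _ => ?_
      simp only [PiLp.add_apply, PiLp.smul_apply, smul_eq_mul, Real.norm_eq_abs, sq_abs]
      by_cases hi : x₀ i = 0
      · rcases hs with h | h <;> rw [hi, h] <;> ring
      · rw [hw i hi]; ring
    rw [ratio, if_neg hne, hl1, hnorm, hF]
  have hslope : Filter.Tendsto (slope F 0) (nhdsWithin 0 {(0:ℝ)}ᶜ) (nhds (l1 w / ‖x₀‖)) :=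
    hasDerivAt_iff_tendsto_slope.mp hFderiv
  have hmono : nhdsWithin (0:ℝ) (Set.Ioi 0) ≤ nhdsWithin 0 {(0:ℝ)}ᶜ :=
    nhdsWithin_mono 0 (fun x hx => ne_of_gt hx)
  have hslope' := hslope.mono_left hmono
  have htend : ∀ s : ℝ, s = 1 ∨ s = -1 →
      Filter.Tendsto (fun τ : ℝ => (ratio (x₀ + (s * τ) • w) - ratio x₀) / τ)
        (nhdsWithin 0 (Set.Ioi 0)) (nhds (l1 w / ‖x₀‖)) := by
    intro s hs
    refine hslope'.congr' ?_
    filter_upwards [self_mem_nhdsWithin] with τ (hτ : 0 < τ)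
    rw [slope_def_field, key τ hτ s hs, hratio0, hF0]
    field_simp
    rw [sub_zero, mul_div_assoc, div_self (ne_of_gt hτ), mul_one]
  refine ⟨?_, ?_, ?_⟩
  · have := htend 1 (Or.inl rfl)
    simpa using this
  · have := htend (-1) (Or.inr rfl)
    refine this.congr fun τ => ?_
    rw [show x₀ + (-1 * τ) • w = x₀ - τ • w from by module]
  · intro hwne
    obtain ⟨i, hi⟩ : ∃ i, w i ≠ 0 := by
      by_contra h; push_neg at h; exact hwne (by ext j; exact h j)
    have h1 : 0 < l1 w := by
      have : |w i| ≤ l1 w := Finset.single_le_sum (fun j _ => abs_nonneg (w j)) (Finset.mem_univ i)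
      exact lt_of_lt_of_le (abs_pos.mpr hi) this
    positivity
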